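/- Let 𝔟 ⊂ 𝔰𝔭(V) be a Borel (maximal locally solvable) subalgebra, M ⊆ V a maximal 𝔟-stable isotropic subspace, and G', G'' subspaces stable under 𝔟 with M ⊆ G' ⊆ G'' ⊆ M^⊥ and dim G''/G' = 1. Then G'' ∩ (G')^⊥ = M. -/

import Mathlib

attribute [local instance 100] LieRing.ofAssociativeRing

/-- The perpendicular complement of a subspace of `V` with respect to a
bilinear form `B` on `V`. -/
def perp {V : Type*} [AddCommGroup V] [Module ℂ V]
    (B : V →ₗ[ℂ] V →ₗ[ℂ] ℂ) (F : Submodule ℂ V) : Submodule ℂ V where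
  carrier := {y | ∀ x ∈ F, B x y = 0}
  add_mem' := by intro a b ha hb x hx; simp [map_add, ha x hx, hb x hx]
  zero_mem' := by intro x hx; simp
  smul_mem' := by intro c a ha x hx; simp [ha x hx]

/-- The Lie algebra of finite-rank endomorphisms of `V` that are skew-adjoint
with respect to `B`.  For a nondegenerate symmetric form this is
`𝔰𝔬(V) = ⋀²V`, and for a nondegenerate antisymmetric form it is
`𝔰𝔭(V) = Sym²(V)`, both inside `𝔤𝔩(V,V)`. -/
def skewFR {V : Type*} [AddCommGroup V] [Module ℂ V]
    (B : V →ₗ[ℂ] V →ₗ[ℂ] ℂ) : LieSubalgebra ℂ (Module.End ℂ V) where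
  carrier := {f | (∃ s : Set V, s.Finite ∧ LinearMap.range f ≤ Submodule.span ℂ s) ∧
    ∀ x y : V, B (f x) y = - B x (f y)}
  add_mem' := by
    rintro f g ⟨⟨s, hsf, hs⟩, hf⟩ ⟨⟨t, htf, ht⟩, hg⟩
    refine ⟨⟨s ∪ t, hsf.union htf, ?_⟩, fun x y => ?_⟩
    · rintro v ⟨x, rfl⟩
      have h1 : f x ∈ Submodule.span ℂ (s ∪ t) :=
        Submodule.span_mono Set.subset_union_left (hs ⟨x, rfl⟩)
      have h2 : g x ∈ Submodule.span ℂ (s ∪ t) :=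
        Submodule.span_mono Set.subset_union_right (ht ⟨x, rfl⟩)
      simpa [LinearMap.add_apply] using add_mem h1 h2
    · simp only [LinearMap.add_apply, map_add, LinearMap.add_apply, hf x y, hg x y]
      ring
  zero_mem' := by
    exact ⟨⟨∅, Set.finite_empty, by simp [LinearMap.range_zero]⟩, by simp⟩
  smul_mem' := by
    rintro c f ⟨⟨s, hsf, hs⟩, hf⟩
    refine ⟨⟨s, hsf, ?_⟩, fun x y => ?_⟩
    · rintro v ⟨x, rfl⟩
      simpa [LinearMap.smul_apply] using Submodule.smul_mem _ c (hs ⟨x, rfl⟩)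
    · simp only [LinearMap.smul_apply, map_smul, LinearMap.smul_apply, smul_eq_mul, hf x y]
      ring
  lie_mem' := by
    rintro f g ⟨⟨s, hsf, hs⟩, hf⟩ ⟨⟨t, htf, ht⟩, hg⟩
    have hbr : ∀ x : V, ⁅f, g⁆ x = f (g x) - g (f x) := by
      intro x
      rw [LieRing.of_associative_ring_bracket]
      simp [LinearMap.sub_apply, Module.End.mul_apply]
    constructor
    · refine ⟨s ∪ t, hsf.union htf, ?_⟩
      rintro v ⟨x, rfl⟩
      have h1 : f (g x) ∈ Submodule.span ℂ (s ∪ t) :=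
        Submodule.span_mono Set.subset_union_left (hs ⟨g x, rfl⟩)
      have h2 : g (f x) ∈ Submodule.span ℂ (s ∪ t) :=
        Submodule.span_mono Set.subset_union_right (ht ⟨f x, rfl⟩)
      rw [hbr]
      exact sub_mem h1 h2
    · intro x y
      rw [hbr, hbr]
      simp only [map_sub, LinearMap.sub_apply, map_sub, hf, hg]
      ring

/-- A Lie subalgebra is locally solvable if every finite subset of it is
contained in a solvable subalgebra (itself contained in the given one). -/
def LocallySolvable {L : Type*} [LieRing L] [LieAlgebra ℂ L]
    (b : LieSubalgebra ℂ L) : Prop :=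
  ∀ T : Finset L, (↑T : Set L) ⊆ (b : Set L) →
    ∃ K : LieSubalgebra ℂ L, (K : Set L) ⊆ (b : Set L) ∧
      LieAlgebra.IsSolvable K ∧ (↑T : Set L) ⊆ (K : Set L)

/-- A Borel subalgebra of `g`: a maximal locally solvable subalgebra of `g`. -/
def IsBorelIn {L : Type*} [LieRing L] [LieAlgebra ℂ L]
    (g b : LieSubalgebra ℂ L) : Prop :=
  b ≤ g ∧ LocallySolvable b ∧
    ∀ c : LieSubalgebra ℂ L, c ≤ g → LocallySolvable c → b ≤ c → c = b

/-- A subspace `N` of `V` is stable under a family `b` of endomorphisms. -/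
def StableUnder {V : Type*} [AddCommGroup V] [Module ℂ V]
    (b : LieSubalgebra ℂ (Module.End ℂ V)) (N : Submodule ℂ V) : Prop :=
  ∀ f ∈ b, ∀ x ∈ N, f x ∈ N

/-- let `𝔟 ⊂ 𝔰𝔭(V)` be a Borel (maximal locally solvable)
subalgebra, `M ⊆ V` a maximal `𝔟`-stable isotropic subspace, and `G'`, `G''`
`𝔟`-stable subspaces with `M ⊆ G' ⊆ G'' ⊆ M^⊥` and `dim G''/G' = 1`.
Then `G'' ∩ (G')^⊥ = M`. -/
theorem sp_inter_eq_max_stable_isotropic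
    {V : Type*} [AddCommGroup V] [Module ℂ V]
    (hV : Module.rank ℂ V ≤ Cardinal.aleph0)
    (B : V →ₗ[ℂ] V →ₗ[ℂ] ℂ)
    (hB : ∀ x : V, (∀ y : V, B x y = 0) → x = 0)
    (hAlt : ∀ x y : V, B x y = - B y x)
    (b : LieSubalgebra ℂ (Module.End ℂ V))
    (hb : IsBorelIn (skewFR B) b)
    (M : Submodule ℂ V)
    (hMstab : StableUnder b M) (hMiso : M ≤ perp B M)
    (hMmax : ∀ N : Submodule ℂ V,
      StableUnder b N → N ≤ perp B N → M ≤ N → N = M)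
    (G' G'' : Submodule ℂ V)
    (hG'stab : StableUnder b G') (hG''stab : StableUnder b G'')
    (h1 : M ≤ G') (h2 : G' ≤ G'') (h3 : G'' ≤ perp B M)
    (hcodim : Module.rank ℂ (↥G'' ⧸ (G'.comap G''.subtype)) = 1) :
    G'' ⊓ perp B G' = M := by
  have hBxx : ∀ x : V, B x x = 0 := by
    intro x
    have h := hAlt x x
    linear_combination h / 2
  -- M is contained in G'' ⊓ perp B G'
  have hMle : M ≤ G'' ⊓ perp B G' := by
    intro m hm
    refine ⟨h2 (h1 hm), ?_⟩
    intro x hx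
    have hx'' : x ∈ G'' := h2 hx
    have := h3 hx'' m hm
    rw [hAlt]
    simpa using this
  -- key : elements of G'' ⊓ perp B G' pair to zero
  have key : ∀ w₁ ∈ G'' ⊓ perp B G', ∀ w₂ ∈ G'' ⊓ perp B G', B w₁ w₂ = 0 := by
    intro w₁ hw₁ w₂ hw₂
    obtain ⟨hw₁'', hw₁p⟩ := hw₁
    obtain ⟨hw₂'', hw₂p⟩ := hw₂
    obtain ⟨v₀, hv₀⟩ := rank_le_one_iff.mp hcodim.le
    obtain ⟨c₁, hc₁⟩ := hv₀ (Submodule.Quotient.mk (⟨w₁, hw₁''⟩ : G''))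
    obtain ⟨c₂, hc₂⟩ := hv₀ (Submodule.Quotient.mk (⟨w₂, hw₂''⟩ : G''))
    by_cases hc : c₁ = 0
    · -- then w₁ ∈ G'
      have : Submodule.Quotient.mk (⟨w₁, hw₁''⟩ : G'')
          = (0 : ↥G'' ⧸ (G'.comap G''.subtype)) := by
        rw [← hc₁, hc, zero_smul]
      have hmem : w₁ ∈ G' := by
        have := (Submodule.Quotient.mk_eq_zero _).mp this
        simpa [Submodule.mem_comap] using this
      exact hw₂p w₁ hmem
    · -- w₂ - (c₂/c₁) • w₁ ∈ G'
      have hq : Submodule.Quotient.mk ((⟨w₂, hw₂''⟩ : G'') - (c₂/c₁) • ⟨w₁, hw₁''⟩)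
          = (0 : ↥G'' ⧸ (G'.comap G''.subtype)) := by
        rw [Submodule.Quotient.mk_sub, Submodule.Quotient.mk_smul, ← hc₁, ← hc₂,
          smul_smul, div_mul_cancel₀ _ hc, sub_self]
      have hmem : w₂ - (c₂/c₁) • w₁ ∈ G' := by
        have := (Submodule.Quotient.mk_eq_zero _).mp hq
        simpa [Submodule.mem_comap] using this
      have h0 : B (w₂ - (c₂/c₁) • w₁) w₁ = 0 := hw₁p _ hmem
      have h1' : B w₂ w₁ = 0 := by
        have hxx := hBxx w₁
        simp only [map_sub, map_smul, LinearMap.sub_apply, LinearMap.smul_apply,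
          smul_eq_mul, hxx, mul_zero, sub_zero] at h0
        exact h0
      rw [hAlt, h1', neg_zero]
  -- N := M ⊔ (G'' ⊓ perp B G') is b-stable and isotropic
  set P : Submodule ℂ V := G'' ⊓ perp B G' with hPdef
  have hPstab : StableUnder b P := by
    intro f hf x hx
    obtain ⟨hx'', hxp⟩ := hx
    refine ⟨hG''stab f hf x hx'', ?_⟩
    intro z hz
    have hskew := (hb.1 hf).2
    rw [show B z (f x) = - B (f z) x by
      have := hskew z x; linear_combination this]
    rw [hxp (f z) (hG'stab f hf z hz), neg_zero]
  have hNstab : StableUnder b (M ⊔ P) := by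
    intro f hf x hx
    obtain ⟨m, hm, p, hp, rfl⟩ := Submodule.mem_sup.mp hx
    rw [map_add]
    exact Submodule.add_mem_sup (hMstab f hf m hm) (hPstab f hf p hp)
  have hNiso : (M ⊔ P) ≤ perp B (M ⊔ P) := by
    intro y hy x hx
    obtain ⟨m₁, hm₁, p₁, hp₁, rfl⟩ := Submodule.mem_sup.mp hx
    obtain ⟨m₂, hm₂, p₂, hp₂, rfl⟩ := Submodule.mem_sup.mp hy
    have e1 : B m₁ m₂ = 0 := hMiso hm₂ m₁ hm₁
    have e2 : B m₁ p₂ = 0 := h3 hp₂.1 m₁ hm₁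
    have e3 : B p₁ m₂ = 0 := by
      rw [hAlt, hp₁.2 m₂ (h1 hm₂), neg_zero]
    have e4 : B p₁ p₂ = 0 := key p₁ hp₁ p₂ hp₂
    simp [map_add, e1, e2, e3, e4]
  have hNM : M ⊔ P = M := hMmax _ hNstab hNiso le_sup_left
  refine le_antisymm ?_ hMle
  calc P ≤ M ⊔ P := le_sup_right
    _ = M := hNM
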